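/- For all real numbers x with x not in πZ (or complex x avoiding the poles), one has 1/sin(x)^2 = Σ_{k∈Z} 1/(x + kπ)^2. -/

import Mathlib

open Real Filter Finset Topology

-- duplication formula
lemma ML.dup (y : ℝ) (hy : Real.sin y ≠ 0) :
    1 / Real.sin y ^ 2
      = (1/4) * (1 / Real.sin (y/2) ^ 2) + (1/4) * (1 / Real.sin ((y+π)/2) ^ 2) := by
  have hs : Real.sin y = 2 * Real.sin (y/2) * Real.cos (y/2) := by
    rw [show y = 2 * (y/2) by ring, Real.sin_two_mul]; ring_nf
  have hc : Real.sin ((y+π)/2) = Real.cos (y/2) := by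
    rw [show (y+π)/2 = y/2 + π/2 by ring, Real.sin_add_pi_div_two]
  have h1 : Real.sin (y/2) ≠ 0 := fun h => hy (by rw [hs, h]; ring)
  have h2 : Real.cos (y/2) ≠ 0 := fun h => hy (by rw [hs, h]; ring)
  rw [hc, hs]
  have hpy := Real.sin_sq_add_cos_sq (y/2)
  field_simp
  nlinarith [hpy, sq_nonneg (Real.sin (y/2)), sq_nonneg (Real.cos (y/2))]

-- nonvanishing
lemma ML.sin_ne (x : ℝ) (hx : ∀ k : ℤ, x ≠ (k : ℝ) * π) (j : ℤ) (n : ℕ) :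
    Real.sin ((x + j * π) / 2 ^ n) ≠ 0 := by
  rw [Ne, Real.sin_eq_zero_iff]
  rintro ⟨k, hk⟩
  apply hx (k * 2 ^ n - j)
  have h2 : (2:ℝ)^n ≠ 0 := by positivity
  rw [eq_div_iff h2] at hk
  push_cast
  nlinarith [hk]

-- dyadic expansion over ℤ-interval Ico 0 (2^n)
lemma ML.dyadic (x : ℝ) (hx : ∀ k : ℤ, x ≠ (k : ℝ) * π) (n : ℕ) :
    1 / Real.sin x ^ 2
      = ∑ j ∈ Finset.Ico (0:ℤ) (2^n : ℕ),
          (1/4^n) * (1 / Real.sin ((x + j * π) / 2^n) ^ 2) := by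
  induction n with
  | zero =>
    have h1 : Finset.Ico (0:ℤ) ((2^0:ℕ):ℤ) = {0} := rfl
    rw [h1]; simp
  | succ n ih =>
    have key : ∀ j ∈ Finset.Ico (0:ℤ) ((2^n : ℕ) : ℤ),
        (1/4^n) * (1 / Real.sin ((x + j * π) / 2^n) ^ 2)
          = (1/4^(n+1)) * (1 / Real.sin ((x + j * π) / 2^(n+1)) ^ 2)
            + (1/4^(n+1)) * (1 / Real.sin ((x + (j + (2^n:ℕ)) * π) / 2^(n+1)) ^ 2) := by
      intro j _
      have hdup := ML.dup ((x + j * π) / 2^n) (ML.sin_ne x hx j n)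
      have e1 : (x + j * π) / 2^n / 2 = (x + j * π) / 2^(n+1) := by
        rw [div_div, ← pow_succ]
      have e2 : ((x + j * π) / 2^n + π) / 2 = (x + ((j:ℝ) + (2^n:ℕ)) * π) / 2^(n+1) := by
        push_cast
        field_simp
        ring
      rw [e1, e2] at hdup
      rw [hdup]
      push_cast
      ring
    rw [ih, Finset.sum_congr rfl key, Finset.sum_add_distrib]
    have hsplit : Finset.Ico (0:ℤ) ((2^(n+1):ℕ):ℤ)
        = Finset.Ico (0:ℤ) ((2^n:ℕ):ℤ) ∪ Finset.Ico ((2^n:ℕ):ℤ) ((2^(n+1):ℕ):ℤ) := by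
      exact (Finset.Ico_union_Ico_eq_Ico (by positivity)
        (by exact_mod_cast Nat.pow_le_pow_right (by norm_num) (Nat.le_succ n))).symm
    rw [hsplit, Finset.sum_union (Finset.Ico_disjoint_Ico_consecutive _ _ _)]
    congr 1
    have hh := Finset.sum_Ico_add' (fun j : ℤ =>
      (1/4^(n+1)) * (1 / Real.sin ((x + j * π) / 2^(n+1)) ^ 2)) (0:ℤ) ((2^n:ℕ):ℤ) ((2^n:ℕ):ℤ)
    rw [zero_add] at hh
    rw [show ((2^(n+1):ℕ):ℤ) = ((2^n:ℕ):ℤ) + ((2^n:ℕ):ℤ) by push_cast; ring, ← hh]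
    exact Finset.sum_congr rfl (fun j _ => by push_cast; ring_nf)

lemma ML.shift (f : ℤ → ℝ) (T : ℕ) (hf : ∀ j : ℤ, f (j + T) = f j) (a : ℤ) :
    ∑ j ∈ Finset.Ico a (a + T), f j = ∑ j ∈ Finset.Ico (0:ℤ) (T:ℤ), f j := by
  have step : ∀ b : ℤ, ∑ j ∈ Finset.Ico (b+1) (b+1+T), f j = ∑ j ∈ Finset.Ico b (b+T), f j := by
    intro b
    have hsing : ∀ c : ℤ, Finset.Ico c (c+1) = {c} := by
      intro c; ext m; simp; omega
    have h1 : Finset.Ico b (b+1+(T:ℤ)) = Finset.Ico b (b+1) ∪ Finset.Ico (b+1) (b+1+T) :=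
      (Finset.Ico_union_Ico_eq_Ico (by omega) (by omega)).symm
    have h2 : Finset.Ico b (b+1+(T:ℤ)) = Finset.Ico b (b+T) ∪ Finset.Ico (b+T) (b+1+T) :=
      (Finset.Ico_union_Ico_eq_Ico (by omega) (by omega)).symm
    have e1 : ∑ j ∈ Finset.Ico b (b+1+(T:ℤ)), f j
        = f b + ∑ j ∈ Finset.Ico (b+1) (b+1+(T:ℤ)), f j := by
      rw [h1, Finset.sum_union (Finset.Ico_disjoint_Ico_consecutive _ _ _), hsing,
        Finset.sum_singleton]
    have e2 : ∑ j ∈ Finset.Ico b (b+1+(T:ℤ)), f j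
        = (∑ j ∈ Finset.Ico b (b+(T:ℤ)), f j) + f (b + T) := by
      rw [h2, Finset.sum_union (Finset.Ico_disjoint_Ico_consecutive _ _ _),
        show b+1+(T:ℤ) = (b+T)+1 by ring, hsing, Finset.sum_singleton]
    rw [hf b] at e2
    linarith [e1, e2]
  induction a using Int.induction_on with
  | zero => norm_num
  | succ k ih => rw [step k] at *; exact ih
  | pred k ih =>
    have h := step (-(k+1:ℤ))
    rw [show -(k+1:ℤ)+1 = -k by ring] at h
    rw [show (-(k:ℤ)-1) = -(k+1:ℤ) by ring, ← h]
    convert ih using 3 <;> ring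

lemma ML.summable_aux (x : ℝ) (hx0 : 0 < x) (hxπ : x < π) :
    Summable (fun k : ℤ => 1 / (x + k * π) ^ 2) := by
  have hπ3 := Real.pi_gt_three
  apply Summable.of_norm_bounded_eventually (g := fun k : ℤ => 1 / (k:ℝ)^2)
    (summable_one_div_int_pow.mpr one_lt_two)
  rw [Filter.eventually_cofinite]
  apply Set.Finite.subset (Set.finite_Icc (-1 : ℤ) 0)
  intro k hk
  simp only [Set.mem_setOf_eq, not_le] at hk
  by_contra hk'
  simp only [Set.mem_Icc, not_and, not_le] at hk'
  have hcase : (k:ℝ) ≥ 1 ∨ (k:ℝ) ≤ -2 := by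
    rcases lt_or_ge k (-1) with h | h
    · right; exact_mod_cast (by omega : k ≤ -2)
    · left; exact_mod_cast (by omega : 1 ≤ k)
  have hsq : (k:ℝ)^2 ≤ (x + k * π)^2 := by
    rcases hcase with h | h
    · nlinarith [mul_le_mul_of_nonneg_left hπ3.le (by linarith : (0:ℝ) ≤ (k:ℝ))]
    · have hπ4 := Real.pi_lt_d2
      have hm : (k:ℝ) * π ≤ (k:ℝ) * 3 :=
        mul_le_mul_of_nonpos_left hπ3.le (by linarith : (k:ℝ) ≤ 0)
      have hA : 0 < -(x + k * π - k) := by nlinarith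
      have hB : 0 < -(x + k * π + k) := by nlinarith
      nlinarith [mul_pos hA hB]
  have hk0 : (0:ℝ) < (k:ℝ)^2 := by
    rcases hcase with h | h <;> nlinarith
  have : ‖1 / (x + k * π)^2‖ ≤ 1 / (k:ℝ)^2 := by
    rw [norm_div, norm_one, Real.norm_eq_abs, abs_of_nonneg (by positivity)]
    exact one_div_le_one_div_of_le hk0 hsq
  exact absurd this (not_le.mpr hk)

lemma ML.main (x : ℝ) (hx0 : 0 < x) (hxπ : x < π) :
    1 / Real.sin x ^ 2 = ∑' k : ℤ, 1 / (x + (k : ℝ) * π) ^ 2 := by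
  have hπ := Real.pi_pos
  have hx : ∀ k : ℤ, x ≠ (k : ℝ) * π := by
    intro k hk
    rcases le_or_gt k 0 with h | h
    · have : (k:ℝ) ≤ 0 := by exact_mod_cast h
      nlinarith
    · have : (1:ℝ) ≤ (k:ℝ) := by exact_mod_cast h
      nlinarith
  have hX : ∀ j : ℤ, x + (j:ℝ) * π ≠ 0 := by
    intro j h
    exact hx (-j) (by push_cast; linarith)
  -- the approximating functions
  set f : ℕ → ℤ → ℝ := fun n j => (1/4^(n+1)) * (1 / Real.sin ((x + j * π) / 2^(n+1)) ^ 2)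
    with hf
  set F : ℕ → ℤ → ℝ :=
    fun n j => if j ∈ Finset.Ico (-(2^n:ℤ)) (2^n : ℤ) then f n j else 0 with hF
  -- each F n has finite support and sums to 1/sin^2
  have hFsum : ∀ n, ∑' j : ℤ, F n j = 1 / Real.sin x ^ 2 := by
    intro n
    have h1 : ∑' j : ℤ, F n j = ∑ j ∈ Finset.Ico (-(2^n:ℤ)) (2^n : ℤ), F n j :=
      tsum_eq_sum (fun b hb => by simp only [hF, if_neg hb])
    have h2 : ∑ j ∈ Finset.Ico (-(2^n:ℤ)) (2^n : ℤ), F n j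
        = ∑ j ∈ Finset.Ico (-(2^n:ℤ)) (2^n : ℤ), f n j :=
      Finset.sum_congr rfl (fun j hj => by simp only [hF, if_pos hj])
    have hper : ∀ j : ℤ, f n (j + (2^(n+1):ℕ)) = f n j := by
      intro j
      simp only [hf]
      push_cast
      rw [show (x + ((j:ℝ) + 2^(n+1)) * π) / 2^(n+1) = (x + (j:ℝ) * π) / 2^(n+1) + π by
        field_simp; ring, Real.sin_add_pi, neg_sq]
    have h3 := ML.shift (f n) (2^(n+1)) hper (-(2^n:ℤ))
    rw [show -(2^n:ℤ) + ((2^(n+1):ℕ):ℤ) = (2^n:ℤ) by push_cast; ring] at h3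
    have h4 := ML.dyadic x hx (n+1)
    rw [h1, h2, h3, h4]
  -- pointwise convergence
  have hlim : ∀ j : ℤ, Filter.Tendsto (fun n => F n j) Filter.atTop
      (𝓝 (1 / (x + (j:ℝ) * π) ^ 2)) := by
    intro j
    set X := x + (j:ℝ) * π with hXdef
    have hX0 : X ≠ 0 := hX j
    -- t n → 0 within ≠ 0
    have ht0 : Filter.Tendsto (fun n : ℕ => X / 2^(n+1)) Filter.atTop (𝓝[≠] 0) := by
      apply tendsto_nhdsWithin_of_tendsto_nhds_of_eventually_within
      · have h := (tendsto_pow_atTop_nhds_zero_of_lt_one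
          (by norm_num : (0:ℝ) ≤ 1/2) (by norm_num)).const_mul (X * (1/2))
        rw [mul_zero] at h
        apply h.congr
        intro n
        rw [div_eq_mul_inv]
        ring_nf
        simp only [one_div]
      · filter_upwards with n
        simp only [Set.mem_compl_iff, Set.mem_singleton_iff]
        positivity
    -- y / sin y → 1
    have hslope : Filter.Tendsto (fun y : ℝ => Real.sin y / y) (𝓝[≠] 0) (𝓝 1) := by
      have h := hasDerivAt_iff_tendsto_slope.mp (Real.hasDerivAt_sin 0)
      rw [Real.cos_zero] at h
      apply h.congr'
      filter_upwards [self_mem_nhdsWithin] with y hy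
      simp [slope_fun_def, Real.sin_zero, div_eq_inv_mul]
    have hinv : Filter.Tendsto (fun y : ℝ => (y / Real.sin y)^2) (𝓝[≠] 0) (𝓝 1) := by
      have h1 := (hslope.inv₀ one_ne_zero).pow 2
      rw [inv_one, one_pow] at h1
      exact h1.congr (fun y => by rw [inv_div])
    -- f n j → 1 / X^2
    have hfl : Filter.Tendsto (fun n => f n j) Filter.atTop (𝓝 (1 / X ^ 2)) := by
      have heq : ∀ n : ℕ, f n j = (1 / X^2) * ((X / 2^(n+1)) / Real.sin (X / 2^(n+1)))^2 := by
        intro n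
        have h2 : ((2:ℝ)^(n+1)) ≠ 0 := by positivity
        simp only [hf, ← hXdef]
        rw [show (4:ℝ) = 2^2 by norm_num]
        field_simp
        ring_nf
        rw [show (2:ℝ)^(n*2) = 4^n by rw [mul_comm, pow_mul]; norm_num]
      rw [show (1:ℝ) / X^2 = 1/X^2 * 1 by ring]
      exact Filter.Tendsto.congr (fun n => (heq n).symm)
        ((hinv.comp ht0).const_mul (1/X^2))
    -- F n j = f n j eventually
    apply hfl.congr'
    filter_upwards [Filter.eventually_ge_atTop j.natAbs] with n hn
    have hpow : j.natAbs < 2^n :=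
      (Nat.lt_two_pow_self (n := j.natAbs)).trans_le (Nat.pow_le_pow_right (by norm_num) hn)
    have hmem : j ∈ Finset.Ico (-(2^n:ℤ)) (2^n:ℤ) := by
      simp only [Finset.mem_Ico]
      have h2 : (j.natAbs : ℤ) < 2^n := by exact_mod_cast hpow
      omega
    simp only [hF, if_pos hmem]
  -- uniform bound
  have hbound : ∀ n : ℕ, ∀ j : ℤ, ‖F n j‖ ≤ (π^2/4) * (1 / (x + (j:ℝ) * π)^2) := by
    intro n j
    by_cases hmem : j ∈ Finset.Ico (-(2^n:ℤ)) (2^n : ℤ)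
    · simp only [hF, if_pos hmem]
      set X := x + (j:ℝ) * π with hXdef
      have hX0 : X ≠ 0 := hX j
      rw [Finset.mem_Ico] at hmem
      have hj1 : (j:ℝ) ≤ 2^n - 1 := by
        have : (j:ℤ) ≤ 2^n - 1 := by omega
        exact_mod_cast this
      have hj2 : -(2^n : ℝ) ≤ (j:ℝ) := by exact_mod_cast hmem.1
      have h2pos : (0:ℝ) < 2^n := by positivity
      have hXlt : |X| < 2^n * π := by
        rw [abs_lt]
        constructor
        · nlinarith [mul_le_mul_of_nonneg_right hj2 hπ.le]
        · nlinarith [mul_le_mul_of_nonneg_right hj1 hπ.le]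
      set t := X / 2^(n+1) with htdef
      have h2p : (0:ℝ) < (2:ℝ)^(n+1) := by positivity
      have ht0 : t ≠ 0 := div_ne_zero hX0 h2p.ne'
      have htle : |t| ≤ π/2 := by
        rw [htdef, abs_div, abs_of_pos h2p, div_le_iff₀ h2p]
        have : (2:ℝ)^n * π = π/2 * 2^(n+1) := by rw [pow_succ]; ring
        linarith [hXlt]
      have hjordan := Real.mul_abs_le_abs_sin htle
      have hj2' : 2 * |t| ≤ π * |Real.sin t| := by
        rw [div_mul_eq_mul_div, div_le_iff₀ hπ] at hjordan
        linarith [hjordan]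
      have hsq : 4 * t^2 ≤ π^2 * Real.sin t^2 := by
        nlinarith [mul_self_le_mul_self (by positivity : (0:ℝ) ≤ 2 * |t|) hj2',
          sq_abs t, sq_abs (Real.sin t)]
      have ht2 : (4:ℝ)^(n+1) * t^2 = X^2 := by
        have h44 : ((2:ℝ)^(n+1))^2 = 4^(n+1) := by
          rw [← pow_mul, mul_comm, pow_mul]; norm_num
        rw [htdef, div_pow, h44]
        field_simp
      have hsinne : Real.sin t ≠ 0 := by
        have h := ML.sin_ne x hx j (n+1)
        rw [htdef, hXdef]; exact h
      have hs2pos : (0:ℝ) < Real.sin t ^ 2 := by positivity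
      have hApos : (0:ℝ) < (4:ℝ)^(n+1) * Real.sin t^2 := by positivity
      have hX2pos : (0:ℝ) < X^2 := by positivity
      have key : X^2 ≤ (π^2/4) * ((4:ℝ)^(n+1) * Real.sin t^2) := by
        rw [← ht2, show (π^2/4) * ((4:ℝ)^(n+1) * Real.sin t^2)
            = (4:ℝ)^(n+1) * (π^2/4 * Real.sin t^2) by ring]
        exact mul_le_mul_of_nonneg_left (by linarith) (by positivity)
      have hfnn : (0:ℝ) ≤ f n j := by
        simp only [hf]; positivity
      rw [Real.norm_eq_abs, abs_of_nonneg hfnn]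
      have e1 : f n j = 1 / ((4:ℝ)^(n+1) * Real.sin t^2) := by
        simp only [hf, htdef, hXdef]
        ring
      have e2 : (π^2/4) * (1 / X^2) = (π^2/4) / X^2 := by ring
      rw [e1, e2, div_le_div_iff₀ hApos hX2pos]
      linarith [key]
    · simp only [hF, if_neg hmem, norm_zero]
      positivity
  -- assemble via dominated convergence
  have hbd : Summable (fun j : ℤ => (π^2/4) * (1 / (x + (j:ℝ) * π)^2)) :=
    (ML.summable_aux x hx0 hxπ).mul_left _
  have hT := tendsto_tsum_of_dominated_convergence (𝓕 := Filter.atTop) (f := F)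
      (g := fun j : ℤ => 1/(x + (j:ℝ) * π)^2) hbd hlim
      (Filter.Eventually.of_forall hbound)
  have hconst : Filter.Tendsto (fun n : ℕ => ∑' j, F n j) Filter.atTop
      (𝓝 (1 / Real.sin x ^ 2)) := by
    simp only [hFsum]
    exact tendsto_const_nhds
  exact tendsto_nhds_unique hconst hT

/-- Mittag-Leffler expansion of the squared cosecant: for real `x` not a multiple of `π`,
`1 / sin(x)^2 = ∑_{k ∈ ℤ} 1 / (x + kπ)^2`. -/
theorem cosecant_squared_expansion (x : ℝ) (hx : ∀ k : ℤ, x ≠ (k : ℝ) * Real.pi) :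
    1 / Real.sin x ^ 2 = ∑' k : ℤ, 1 / (x + (k : ℝ) * Real.pi) ^ 2 := by
  have hπ := Real.pi_pos
  set m : ℤ := ⌊x / π⌋ with hm
  set y : ℝ := x - m * π with hy
  have h1 : (m:ℝ) * π ≤ x := (le_div_iff₀ hπ).mp (Int.floor_le (x / π))
  have h2 : x < ((m:ℝ) + 1) * π := by
    have := (div_lt_iff₀ hπ).mp (Int.lt_floor_add_one (x / π))
    push_cast at this ⊢
    linarith
  have hy0 : 0 ≤ y := by rw [hy]; linarith
  have hy1 : y < π := by rw [hy]; nlinarith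
  have hyne : y ≠ 0 := by
    intro h
    rw [hy, sub_eq_zero] at h
    exact hx m h
  have hmain := ML.main y (lt_of_le_of_ne hy0 (Ne.symm hyne)) hy1
  have hsin : Real.sin x ^ 2 = Real.sin y ^ 2 := by
    have hxe : x = y + m * π := by rw [hy]; ring
    rw [hxe, Real.sin_add_int_mul_pi, mul_pow]
    have hone : ((-1:ℝ)^m)^2 = 1 := by
      rcases Int.even_or_odd m with he | ho
      · rw [he.neg_one_zpow]; norm_num
      · rw [ho.neg_one_zpow]; norm_num
    rw [hone, one_mul]
  have hre : ∑' k : ℤ, 1 / (x + (k:ℝ) * π)^2 = ∑' k : ℤ, 1 / (y + (k:ℝ) * π)^2 := by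
    rw [← (Equiv.addRight m).tsum_eq (fun k : ℤ => 1 / (y + (k:ℝ) * π)^2)]
    apply tsum_congr
    intro k
    simp only [Equiv.coe_addRight]
    push_cast
    rw [hy]
    ring_nf
  rw [hsin, hre]
  exact hmain
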